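/- arXiv:2008.03102 — 8 statements merged into one kernel-verified Lean document; each statement's English description precedes it below -/
import Mathlib

section
/- In the decentralized equilibrium, the derivative of agent j's equilibrium utility with respect to the coalition average type is ∂U_j/∂ξ̄ = ξ_j·N·x₁²·(1 − V''(N·x₁·ξ̄)·ξ_j)/(1 − V''(N·x₁·ξ̄)·N·ξ̄), which is strictly positive; hence every agent's equilibrium utility strictly increases in the average type of their coalition. -/
/-- Decentralized equilibrium: the derivative of agent `j`'s equilibrium
utility with respect to the coalition average type equals
`ξ_j·N·x₁²·(1 − V''(N·x₁·ξ̄)·ξ_j)/(1 − V''(N·x₁·ξ̄)·N·ξ̄)` and is strictly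
positive. -/
theorem decentralized_utility_increasing_in_mean
    (N : ℕ) (hN : 1 ≤ N) (V : ℝ → ℝ) (x₁ : ℝ → ℝ) (ξj : ℝ) (hξj : 0 < ξj)
    (hV : Differentiable ℝ V) (hV' : Differentiable ℝ (deriv V))
    (hVpos : ∀ t, 0 < deriv V t) (hVneg : ∀ t, deriv (deriv V) t < 0)
    (hx₁diff : ∀ ξ > (0:ℝ), DifferentiableAt ℝ x₁ ξ)
    (hx₁pos : ∀ ξ > (0:ℝ), 0 < x₁ ξ)
    (himpl : ∀ ξ > (0:ℝ), deriv V ((N : ℝ) * x₁ ξ * ξ) = x₁ ξ)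
    (hderiv : ∀ ξ > (0:ℝ), deriv x₁ ξ =
      deriv (deriv V) ((N : ℝ) * x₁ ξ * ξ) * N * x₁ ξ /
        (1 - deriv (deriv V) ((N : ℝ) * x₁ ξ * ξ) * N * ξ))
    (ξbar : ℝ) (hξ : 0 < ξbar) :
    deriv (fun ξ => ξj * V ((N : ℝ) * x₁ ξ * ξ) - ξj ^ 2 / 2 * (x₁ ξ) ^ 2) ξbar =
      ξj * N * (x₁ ξbar) ^ 2 *
        ((1 - deriv (deriv V) ((N : ℝ) * x₁ ξbar * ξbar) * ξj) /
          (1 - deriv (deriv V) ((N : ℝ) * x₁ ξbar * ξbar) * N * ξbar)) ∧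
    0 < deriv (fun ξ => ξj * V ((N : ℝ) * x₁ ξ * ξ) - ξj ^ 2 / 2 * (x₁ ξ) ^ 2) ξbar := by
  set X := x₁ ξbar with hX
  set d := deriv x₁ ξbar with hd
  set A := deriv (deriv V) ((N : ℝ) * x₁ ξbar * ξbar) with hA
  have hNpos : (0:ℝ) < (N:ℝ) := by exact_mod_cast Nat.lt_of_lt_of_le Nat.zero_lt_one hN
  have hXpos : 0 < X := hx₁pos ξbar hξ
  have hAneg : A < 0 := hVneg _
  have hD : 0 < 1 - A * N * ξbar := by nlinarith [mul_pos hNpos hξ]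
  have hD' : (1 - A * N * ξbar) ≠ 0 := ne_of_gt hD
  -- derivative computation
  have hx : HasDerivAt x₁ d ξbar := (hx₁diff ξbar hξ).hasDerivAt
  have hg : HasDerivAt (fun ξ => (N : ℝ) * x₁ ξ * ξ)
      (((N:ℝ) * d) * ξbar + ((N:ℝ) * X) * 1) ξbar :=
    (hx.const_mul (N:ℝ)).mul (hasDerivAt_id ξbar)
  have hVg : HasDerivAt (fun ξ => V ((N : ℝ) * x₁ ξ * ξ))
      (deriv V ((N:ℝ) * X * ξbar) * (((N:ℝ) * d) * ξbar + ((N:ℝ) * X) * 1)) ξbar :=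
    (hV _).hasDerivAt.comp ξbar hg
  have hmain : HasDerivAt (fun ξ => ξj * V ((N : ℝ) * x₁ ξ * ξ) - ξj ^ 2 / 2 * (x₁ ξ) ^ 2)
      (ξj * (deriv V ((N:ℝ) * X * ξbar) * (((N:ℝ) * d) * ξbar + ((N:ℝ) * X) * 1))
        - ξj ^ 2 / 2 * ((2:ℕ) * X ^ 1 * d)) ξbar :=
    (hVg.const_mul ξj).sub ((hx.pow 2).const_mul (ξj ^ 2 / 2))
  have hDeq : deriv (fun ξ => ξj * V ((N : ℝ) * x₁ ξ * ξ) - ξj ^ 2 / 2 * (x₁ ξ) ^ 2) ξbar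
      = ξj * (X * (((N:ℝ) * d) * ξbar + ((N:ℝ) * X) * 1)) - ξj ^ 2 / 2 * (2 * X ^ 1 * d) := by
    rw [hmain.deriv, himpl ξbar hξ]
    push_cast
    ring
  have hdval : d = A * N * X / (1 - A * N * ξbar) := hderiv ξbar hξ
  have heq : deriv (fun ξ => ξj * V ((N : ℝ) * x₁ ξ * ξ) - ξj ^ 2 / 2 * (x₁ ξ) ^ 2) ξbar
      = ξj * N * X ^ 2 * ((1 - A * ξj) / (1 - A * N * ξbar)) := by
    rw [hDeq, hdval]
    field_simp
    have hD'' : (1 - (N:ℝ) * A * ξbar) ≠ 0 := by rwa [mul_comm (N:ℝ) A]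
    field_simp
    ring
  refine ⟨heq, ?_⟩
  rw [heq]
  have h1 : 0 < 1 - A * ξj := by nlinarith
  positivity
end

section
/- In the decentralized equilibrium, the single-crossing property holds: ∂²U_j/(∂ξ̄ ∂ξ_j) > 0, i.e., the marginal benefit of a higher coalition average type is strictly increasing in one's own type. -/
/-- Decentralized equilibrium single crossing: the marginal benefit of a higher
coalition average type, `∂U_j/∂ξ̄ = ξ_j·N·x₁²·(1 − V''·ξ_j)/(1 − V''·N·ξ̄)`
(with `c = V''(N·x₁·ξ̄) < 0` fixed, as `ξ_j`'s effect on `ξ̄` is negligible),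
is strictly increasing in the agent's own type `ξ_j`. -/
theorem decentralized_single_crossing
    (N : ℕ) (c x₁ ξbar ξj : ℝ)
    (hc : c < 0) (hx₁ : 0 < x₁) (hξj : 0 < ξj) (hlt : ξj < (N : ℝ) * ξbar) :
    0 < deriv (fun t => t * N * x₁ ^ 2 * ((1 - c * t) / (1 - c * N * ξbar))) ξj := by
  have hNξ : (0:ℝ) < (N : ℝ) * ξbar := hξj.trans hlt
  have hden : (0:ℝ) < 1 - c * N * ξbar := by nlinarith
  have hN : (0:ℝ) < (N : ℝ) := by
    rcases Nat.eq_zero_or_pos N with h | h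
    · simp [h] at hNξ
    · exact_mod_cast h
  have hpoly : HasDerivAt (fun t : ℝ => t - c * t ^ 2) (1 - 2 * c * ξj) ξj := by
    have h1 := (hasDerivAt_id ξj).sub ((hasDerivAt_pow 2 ξj).const_mul c)
    refine h1.congr_deriv ?_
    norm_num
    ring
  have h1 : HasDerivAt (fun t : ℝ => (t - c * t ^ 2) * ((N : ℝ) * x₁ ^ 2 / (1 - c * N * ξbar)))
      ((1 - 2 * c * ξj) * ((N : ℝ) * x₁ ^ 2 / (1 - c * N * ξbar))) ξj :=
    hpoly.mul_const _
  have hfun : (fun t : ℝ => t * N * x₁ ^ 2 * ((1 - c * t) / (1 - c * N * ξbar)))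
      = fun t : ℝ => (t - c * t ^ 2) * ((N : ℝ) * x₁ ^ 2 / (1 - c * N * ξbar)) := by
    funext t; ring
  rw [hfun, h1.deriv]
  have h2 : (0:ℝ) < 1 - 2 * c * ξj := by nlinarith
  positivity
end

section
/- Under centralized effort choice, the common contribution x₁(ξ̄) defined implicitly by N·ξ̄·V'(N·x₁) = x₁ is strictly increasing in the average type: dx₁/dξ̄ = N·V'(N·x₁)/(1 − V''(N·x₁)·N²·ξ̄) > 0. -/
/-- Centralized equilibrium: the common contribution `x₁(ξ̄)` implicitly
defined by `N·ξ̄·V'(N·x₁) = x₁` is strictly increasing in the average type: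
`dx₁/dξ̄ = N·V'(N·x₁)/(1 − V''(N·x₁)·N²·ξ̄) > 0`. -/
theorem centralized_contribution_increasing
    (N : ℕ) (hN : 1 ≤ N) (V : ℝ → ℝ) (x₁ : ℝ → ℝ)
    (hV : Differentiable ℝ V) (hV' : Differentiable ℝ (deriv V))
    (hVpos : ∀ t, 0 < deriv V t) (hVneg : ∀ t, deriv (deriv V) t < 0)
    (hx₁diff : ∀ ξ > (0:ℝ), DifferentiableAt ℝ x₁ ξ)
    (hx₁pos : ∀ ξ > (0:ℝ), 0 < x₁ ξ)
    (himpl : ∀ ξ > (0:ℝ), (N : ℝ) * ξ * deriv V ((N : ℝ) * x₁ ξ) = x₁ ξ)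
    (ξbar : ℝ) (hξ : 0 < ξbar) :
    deriv x₁ ξbar =
      (N : ℝ) * deriv V ((N : ℝ) * x₁ ξbar) /
        (1 - deriv (deriv V) ((N : ℝ) * x₁ ξbar) * (N : ℝ) ^ 2 * ξbar) ∧
    0 < deriv x₁ ξbar := by
  set d := deriv x₁ ξbar with hd
  set A := deriv V ((N : ℝ) * x₁ ξbar) with hA
  set B := deriv (deriv V) ((N : ℝ) * x₁ ξbar) with hB
  have hNpos : (0:ℝ) < (N : ℝ) := by exact_mod_cast hN
  have hx : HasDerivAt x₁ d ξbar := (hx₁diff ξbar hξ).hasDerivAt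
  -- derivative of g ξ = N*ξ * deriv V (N * x₁ ξ)
  have hinner : HasDerivAt (fun ξ => (N : ℝ) * x₁ ξ) ((N : ℝ) * d) ξbar :=
    hx.const_mul _
  have hcomp : HasDerivAt (fun ξ => deriv V ((N : ℝ) * x₁ ξ))
      (B * ((N : ℝ) * d)) ξbar :=
    by have := (hV' ((N : ℝ) * x₁ ξbar)).hasDerivAt.comp ξbar hinner; exact this
  have hlin : HasDerivAt (fun ξ : ℝ => (N : ℝ) * ξ) (N : ℝ) ξbar := by
    simpa using (hasDerivAt_id ξbar).const_mul (N : ℝ)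
  have hg : HasDerivAt (fun ξ => (N : ℝ) * ξ * deriv V ((N : ℝ) * x₁ ξ))
      ((N : ℝ) * A + ((N : ℝ) * ξbar) * (B * ((N : ℝ) * d))) ξbar := by
    exact hlin.mul hcomp
  -- g agrees with x₁ on a neighborhood
  have heq : (fun ξ => (N : ℝ) * ξ * deriv V ((N : ℝ) * x₁ ξ)) =ᶠ[nhds ξbar] x₁ := by
    filter_upwards [Ioi_mem_nhds hξ] with ξ hξ'
    exact himpl ξ hξ'
  have hx' : HasDerivAt x₁ ((N : ℝ) * A + ((N : ℝ) * ξbar) * (B * ((N : ℝ) * d))) ξbar :=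
    hg.congr_of_eventuallyEq heq.symm
  have key : d = (N : ℝ) * A + ((N : ℝ) * ξbar) * (B * ((N : ℝ) * d)) :=
    hx.unique hx'
  have hden : 0 < 1 - B * (N : ℝ) ^ 2 * ξbar := by
    have hBneg : B < 0 := hVneg _
    nlinarith [mul_nonneg (sq_nonneg (N : ℝ)) hξ.le, mul_nonpos_of_nonpos_of_nonneg hBneg.le (mul_nonneg (sq_nonneg (N : ℝ)) hξ.le)]
  have hd_eq : d = (N : ℝ) * A / (1 - B * (N : ℝ) ^ 2 * ξbar) := by
    rw [eq_div_iff hden.ne']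
    nlinarith [key]
  refine ⟨hd_eq, ?_⟩
  rw [hd_eq]
  exact div_pos (mul_pos hNpos (hVpos _)) hden
end

section
/- Under centralized effort choice, ∂U_j/∂ξ̄ = ((ξ_j − ξ̄)/ξ̄)·x₁·(dx₁/dξ̄), which is strictly positive for agents with above-average type (ξ_j > ξ̄), zero for ξ_j = ξ̄, and strictly negative for below-average types (ξ_j < ξ̄). -/
/-- Centralized choice: `∂U_j/∂ξ̄ = ((ξ_j − ξ̄)/ξ̄)·x₁·(dx₁/dξ̄)`, strictly
positive for above-average types, zero at the average, and strictly negative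
for below-average types. -/
theorem centralized_utility_derivative_sign
    (N : ℕ) (hN : 1 ≤ N) (V : ℝ → ℝ) (x₁ : ℝ → ℝ) (ξj : ℝ) (hξj : 0 < ξj)
    (hV : Differentiable ℝ V) (hV' : Differentiable ℝ (deriv V))
    (hVpos : ∀ t, 0 < deriv V t) (hVneg : ∀ t, deriv (deriv V) t < 0)
    (hx₁diff : ∀ ξ > (0:ℝ), DifferentiableAt ℝ x₁ ξ)
    (hx₁pos : ∀ ξ > (0:ℝ), 0 < x₁ ξ)
    (himpl : ∀ ξ > (0:ℝ), (N : ℝ) * ξ * deriv V ((N : ℝ) * x₁ ξ) = x₁ ξ)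
    (hderiv : ∀ ξ > (0:ℝ), deriv x₁ ξ =
      (N : ℝ) * deriv V ((N : ℝ) * x₁ ξ) /
        (1 - deriv (deriv V) ((N : ℝ) * x₁ ξ) * (N : ℝ) ^ 2 * ξ))
    (hderivpos : ∀ ξ > (0:ℝ), 0 < deriv x₁ ξ)
    (ξbar : ℝ) (hξ : 0 < ξbar) :
    deriv (fun ξ => ξj * V ((N : ℝ) * x₁ ξ) - (x₁ ξ) ^ 2 / 2) ξbar =
      ((ξj - ξbar) / ξbar) * x₁ ξbar * deriv x₁ ξbar ∧
    (ξbar < ξj → 0 < deriv (fun ξ => ξj * V ((N : ℝ) * x₁ ξ) - (x₁ ξ) ^ 2 / 2) ξbar) ∧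
    (ξj = ξbar → deriv (fun ξ => ξj * V ((N : ℝ) * x₁ ξ) - (x₁ ξ) ^ 2 / 2) ξbar = 0) ∧
    (ξj < ξbar → deriv (fun ξ => ξj * V ((N : ℝ) * x₁ ξ) - (x₁ ξ) ^ 2 / 2) ξbar < 0) := by
  have hNpos : (0:ℝ) < (N:ℝ) := by exact_mod_cast hN
  have hd : HasDerivAt x₁ (deriv x₁ ξbar) ξbar := (hx₁diff ξbar hξ).hasDerivAt
  have hinner : HasDerivAt (fun ξ => (N:ℝ) * x₁ ξ) ((N:ℝ) * deriv x₁ ξbar) ξbar :=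
    hd.const_mul _
  have hVc : HasDerivAt (fun ξ => V ((N:ℝ) * x₁ ξ))
      (deriv V ((N:ℝ) * x₁ ξbar) * ((N:ℝ) * deriv x₁ ξbar)) ξbar :=
    (hV ((N:ℝ) * x₁ ξbar)).hasDerivAt.comp ξbar hinner
  have hU : HasDerivAt (fun ξ => ξj * V ((N : ℝ) * x₁ ξ) - (x₁ ξ) ^ 2 / 2)
      (ξj * (deriv V ((N:ℝ) * x₁ ξbar) * ((N:ℝ) * deriv x₁ ξbar)) -
        (↑2 * x₁ ξbar ^ 1 * deriv x₁ ξbar) / 2) ξbar :=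
    (hVc.const_mul ξj).sub ((hd.pow 2).div_const 2)
  have himpl' := himpl ξbar hξ
  have hmain : deriv (fun ξ => ξj * V ((N : ℝ) * x₁ ξ) - (x₁ ξ) ^ 2 / 2) ξbar =
      ((ξj - ξbar) / ξbar) * x₁ ξbar * deriv x₁ ξbar := by
    rw [hU.deriv]
    have hVval : deriv V ((N:ℝ) * x₁ ξbar) = x₁ ξbar / ((N:ℝ) * ξbar) := by
      field_simp
      linarith [himpl']
    rw [hVval]
    field_simp
  refine ⟨hmain, ?_, ?_, ?_⟩
  · intro h
    rw [hmain]
    have := hx₁pos ξbar hξ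
    have := hderivpos ξbar hξ
    have : 0 < (ξj - ξbar) / ξbar := div_pos (by linarith) hξ
    positivity
  · intro h; rw [hmain, h]; ring
  · intro h
    rw [hmain]
    have h1 := hx₁pos ξbar hξ
    have h2 := hderivpos ξbar hξ
    have h3 : (ξj - ξbar) / ξbar < 0 := div_neg_of_neg_of_pos (by linarith) hξ
    have := mul_pos h1 h2
    nlinarith
end

section
/- If a > 1 and average coalition payoff strictly increases in coalition size N while total welfare is strictly Schur-concave in the vector of coalition averages (by concavity of ξ ↦ 𝒰(ξ)), then total welfare over any partition of the population into coalitions is maximized by a single coalition containing all agents. -/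
open Finset

/-- Two-variable subadditivity of `rpow` for exponents in `[0,1]`. -/
lemma my_rpow_add_le_add_rpow {x y p : ℝ} (hx : 0 ≤ x) (hy : 0 ≤ y)
    (hp : 0 ≤ p) (hp1 : p ≤ 1) : (x + y) ^ p ≤ x ^ p + y ^ p := by
  have h := NNReal.rpow_add_le_add_rpow x.toNNReal y.toNNReal hp hp1
  have h2 := NNReal.coe_le_coe.2 h
  rw [NNReal.coe_rpow, NNReal.coe_add, NNReal.coe_add, NNReal.coe_rpow, NNReal.coe_rpow,
    Real.coe_toNNReal x hx, Real.coe_toNNReal y hy] at h2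
  exact h2

/-- Subadditivity of `rpow` over finite sums for exponents in `(0,1]`. -/
lemma my_sum_rpow_le {ι : Type*} (s : Finset ι) (f : ι → ℝ) {p : ℝ}
    (hf : ∀ i ∈ s, 0 ≤ f i) (hp : 0 < p) (hp1 : p ≤ 1) :
    (∑ i ∈ s, f i) ^ p ≤ ∑ i ∈ s, f i ^ p := by
  induction s using Finset.cons_induction with
  | empty => simp [Real.zero_rpow hp.ne']
  | cons a s ha ih =>
    rw [Finset.sum_cons, Finset.sum_cons]
    have hfa : 0 ≤ f a := hf a (mem_cons_self a s)
    have hfs : ∀ i ∈ s, 0 ≤ f i := fun i hi => hf i (mem_cons_of_mem hi)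
    have hsum : 0 ≤ ∑ i ∈ s, f i := Finset.sum_nonneg hfs
    calc (f a + ∑ i ∈ s, f i) ^ p ≤ f a ^ p + (∑ i ∈ s, f i) ^ p :=
          my_rpow_add_le_add_rpow hfa hsum hp.le hp1
      _ ≤ f a ^ p + ∑ i ∈ s, f i ^ p := by linarith [ih hfs]

/-- For CRRA with `a > 1`, total welfare over any partition into coalitions
(of sizes `Nl` with means `ml`) is maximized by a single coalition containing
all agents (with the population mean). -/
theorem single_coalition_optimal_when_a_gt_one
    (a : ℝ) (ha : 1 < a) (L : ℕ) (hL : 1 ≤ L)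
    (Nl : Fin L → ℕ) (ml : Fin L → ℝ)
    (hNl : ∀ l, 1 ≤ Nl l) (hml : ∀ l, 0 < ml l) :
    ∑ l, ((1 / (1 - a) - 1 / 2) * (ml l) ^ (2 / (1 + a)) *
          ((Nl l : ℝ)) ^ ((3 - a) / (1 + a)) - (Nl l : ℝ) * ml l / (1 - a)) ≤
    (1 / (1 - a) - 1 / 2) *
        ((∑ l, (Nl l : ℝ) * ml l) / (∑ l, (Nl l : ℝ))) ^ (2 / (1 + a)) *
        (∑ l, (Nl l : ℝ)) ^ ((3 - a) / (1 + a))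
      - (∑ l, (Nl l : ℝ)) *
          ((∑ l, (Nl l : ℝ) * ml l) / (∑ l, (Nl l : ℝ))) / (1 - a) := by
  have hLpos : 0 < L := hL
  have hι : Nonempty (Fin L) := ⟨⟨0, hLpos⟩⟩
  set p : ℝ := 2 / (1 + a) with hp_def
  set q : ℝ := (3 - a) / (1 + a) with hq_def
  have h1a : (0:ℝ) < 1 + a := by linarith
  have hp_pos : 0 < p := by positivity
  have hp_le1 : p ≤ 1 := by rw [hp_def, div_le_one h1a]; linarith
  have htlt : q - p < 0 := by
    rw [hq_def, hp_def, div_sub_div_same]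
    exact div_neg_of_neg_of_pos (by linarith) h1a
  have hc : (1 / (1 - a) - 1 / 2) < 0 := by
    have : 1 / (1 - a) < 0 := div_neg_of_pos_of_neg one_pos (by linarith)
    linarith
  set N : ℝ := ∑ l, (Nl l : ℝ) with hN_def
  set S : ℝ := ∑ l, (Nl l : ℝ) * ml l with hS_def
  have hNl_pos : ∀ l, (0:ℝ) < (Nl l : ℝ) := fun l => by exact_mod_cast hNl l
  have hN_pos : 0 < N := Finset.sum_pos (fun l _ => hNl_pos l) Finset.univ_nonempty
  have hS_pos : 0 < S :=
    Finset.sum_pos (fun l _ => mul_pos (hNl_pos l) (hml l)) Finset.univ_nonempty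
  have hNl_le : ∀ l, (Nl l : ℝ) ≤ N := fun l =>
    Finset.single_le_sum (fun i _ => (hNl_pos i).le) (Finset.mem_univ l)
  -- linear terms are equal
  have hlin : N * (S / N) = S := by field_simp
  -- key inequality: (S/N)^p * N^q ≤ ∑ ml^p * Nl^q
  have hkey : (S / N) ^ p * N ^ q ≤ ∑ l, (ml l) ^ p * (Nl l : ℝ) ^ q := by
    have hNp : (0:ℝ) < N ^ p := Real.rpow_pos_of_pos hN_pos p
    have hNq : N ^ q = N ^ p * N ^ (q - p) := by
      rw [← Real.rpow_add hN_pos]; ring_nf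
    have hfactor : (S / N) ^ p * N ^ q = S ^ p * N ^ (q - p) := by
      rw [Real.div_rpow hS_pos.le hN_pos.le, hNq]
      field_simp
    rw [hfactor]
    have step1 : S ^ p ≤ ∑ l, ((Nl l : ℝ) * ml l) ^ p :=
      my_sum_rpow_le Finset.univ _ (fun l _ => (mul_pos (hNl_pos l) (hml l)).le)
        hp_pos hp_le1
    have step2 : S ^ p * N ^ (q - p) ≤ (∑ l, ((Nl l : ℝ) * ml l) ^ p) * N ^ (q - p) := by
      apply mul_le_mul_of_nonneg_right step1 (Real.rpow_nonneg hN_pos.le _)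
    refine step2.trans ?_
    rw [Finset.sum_mul]
    apply Finset.sum_le_sum
    intro l _
    have hNt : N ^ (q - p) ≤ (Nl l : ℝ) ^ (q - p) :=
      Real.rpow_le_rpow_of_nonpos (hNl_pos l) (hNl_le l) htlt.le
    calc ((Nl l : ℝ) * ml l) ^ p * N ^ (q - p)
        ≤ ((Nl l : ℝ) * ml l) ^ p * (Nl l : ℝ) ^ (q - p) := by
          apply mul_le_mul_of_nonneg_left hNt (Real.rpow_nonneg
            (mul_pos (hNl_pos l) (hml l)).le _)
      _ = (ml l) ^ p * (Nl l : ℝ) ^ q := by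
          have hq' : (Nl l : ℝ) ^ q = (Nl l : ℝ) ^ p * (Nl l : ℝ) ^ (q - p) := by
            rw [← Real.rpow_add (hNl_pos l)]; ring_nf
          rw [Real.mul_rpow (hNl_pos l).le (hml l).le, hq']
          ring
  -- conclude
  have hmul : (1 / (1 - a) - 1 / 2) * (∑ l, (ml l) ^ p * (Nl l : ℝ) ^ q) ≤
      (1 / (1 - a) - 1 / 2) * ((S / N) ^ p * N ^ q) :=
    mul_le_mul_of_nonpos_left hkey hc.le
  calc ∑ l, ((1 / (1 - a) - 1 / 2) * (ml l) ^ p * (Nl l : ℝ) ^ q - (Nl l : ℝ) * ml l / (1 - a))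
      = (1 / (1 - a) - 1 / 2) * (∑ l, (ml l) ^ p * (Nl l : ℝ) ^ q) - S / (1 - a) := by
        rw [Finset.sum_sub_distrib, Finset.mul_sum, ← Finset.sum_div, hS_def]
        congr 1
        apply Finset.sum_congr rfl
        intro l _
        ring
    _ ≤ (1 / (1 - a) - 1 / 2) * ((S / N) ^ p * N ^ q) - S / (1 - a) := by linarith
    _ = (1 / (1 - a) - 1 / 2) * (S / N) ^ p * N ^ q - N * (S / N) / (1 - a) := by
        rw [hlin]; ring
end

section
/- In the two-coalition contest game with payoffs U_j = (ξ_j/N)·X^b/(X^b + Y^b) − x_j²/2 where X = Σx_i, Y = Σy_i, the interior equilibrium conditions imply √(ξ̄_k)·M·y₁ = √(ξ̄_l)·N·x₁, where x_j = ξ_j·x₁ in coalition l (size N, mean ξ̄_l) and y_j = ξ_j·y₁ in coalition k (size M, mean ξ̄_k). -/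
/-- Two-coalition contest: the interior equilibrium FOCs (in aggregate form)
imply `√ξ̄_k·M·y₁ = √ξ̄_l·N·x₁`. -/
theorem contest_equilibrium_relation
    (b ξl ξk x₁ y₁ : ℝ) (N M : ℕ)
    (hb0 : 0 < b) (hb1 : b < 1) (hN : 1 ≤ N) (hM : 1 ≤ M)
    (hξl : 0 < ξl) (hξk : 0 < ξk) (hx₁ : 0 < x₁) (hy₁ : 0 < y₁)
    (hFOCx : (1 / (N : ℝ)) *
        (b * (y₁ * M * ξk) ^ b * (x₁ * N * ξl) ^ (b - 1)) /
        (((x₁ * N * ξl) ^ b + (y₁ * M * ξk) ^ b) ^ 2) = x₁)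
    (hFOCy : (1 / (M : ℝ)) *
        (b * (y₁ * M * ξk) ^ (b - 1) * (x₁ * N * ξl) ^ b) /
        (((x₁ * N * ξl) ^ b + (y₁ * M * ξk) ^ b) ^ 2) = y₁) :
    Real.sqrt ξk * M * y₁ = Real.sqrt ξl * N * x₁ := by
  have hNpos : (0:ℝ) < N := by exact_mod_cast hN
  have hMpos : (0:ℝ) < M := by exact_mod_cast hM
  set X : ℝ := x₁ * N * ξl with hXdef
  set Y : ℝ := y₁ * M * ξk with hYdef
  have hX : 0 < X := by positivity
  have hY : 0 < Y := by positivity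
  have hXb : 0 < X ^ b := Real.rpow_pos_of_pos hX b
  have hYb : 0 < Y ^ b := Real.rpow_pos_of_pos hY b
  have hXb1 : 0 < X ^ (b-1) := Real.rpow_pos_of_pos hX _
  have hYb1 : 0 < Y ^ (b-1) := Real.rpow_pos_of_pos hY _
  have hS : 0 < (X ^ b + Y ^ b) ^ 2 := by positivity
  -- clear denominators
  have h1 : b * Y ^ b * X ^ (b-1) = x₁ * N * (X ^ b + Y ^ b) ^ 2 := by
    field_simp at hFOCx
    linarith [hFOCx]
  have h2 : b * Y ^ (b-1) * X ^ b = y₁ * M * (X ^ b + Y ^ b) ^ 2 := by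
    field_simp at hFOCy
    linarith [hFOCy]
  -- cross-multiply
  have h3 : (b * Y ^ b * X ^ (b-1)) * (y₁ * M) = (b * Y ^ (b-1) * X ^ b) * (x₁ * N) := by
    have := congrArg (· * (y₁ * M)) h1
    rw [this, h2]
    ring
  have hXsplit : X ^ b = X ^ (b-1) * X := by
    rw [← Real.rpow_add_one hX.ne' (b-1)]; ring_nf
  have hYsplit : Y ^ b = Y ^ (b-1) * Y := by
    rw [← Real.rpow_add_one hY.ne' (b-1)]; ring_nf
  rw [hXsplit, hYsplit] at h3
  have h4 : Y * (y₁ * M) = X * (x₁ * N) := by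
    have hne : b * (Y ^ (b-1) * X ^ (b-1)) ≠ 0 := by positivity
    apply mul_left_cancel₀ hne
    linear_combination h3
  -- so ξk * (M*y₁)^2 = ξl * (N*x₁)^2
  have h5 : ξk * ((M:ℝ) * y₁) ^ 2 = ξl * ((N:ℝ) * x₁) ^ 2 := by
    rw [hXdef, hYdef] at h4
    linear_combination h4
  have key : Real.sqrt (ξk * ((M:ℝ) * y₁) ^ 2) = Real.sqrt (ξl * ((N:ℝ) * x₁) ^ 2) := by
    rw [h5]
  rw [Real.sqrt_mul hξk.le, Real.sqrt_mul hξl.le,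
    Real.sqrt_sq (by positivity), Real.sqrt_sq (by positivity)] at key
  calc Real.sqrt ξk * M * y₁ = Real.sqrt ξk * ((M:ℝ) * y₁) := by ring
    _ = Real.sqrt ξl * ((N:ℝ) * x₁) := key
    _ = Real.sqrt ξl * N * x₁ := by ring
end

section
/- In the two-coalition contest game with 0 < b < 1, the equilibrium normalized contribution satisfies x₁² = (1/N²)·(1/ξ̄_l)·b·(√(ξ̄_k·ξ̄_l))^b/((√ξ̄_l)^b + (√ξ̄_k)^b)², with the analogous formula y₁² = (1/M²)·(1/ξ̄_k)·b·(√(ξ̄_k·ξ̄_l))^b/((√ξ̄_l)^b + (√ξ̄_k)^b)² for the other coalition. -/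
/-- Two-coalition contest: combining the FOC with the equilibrium relation
`√ξ̄_k·M·y₁ = √ξ̄_l·N·x₁` yields the closed forms for `x₁²` and `y₁²`. -/
theorem contest_equilibrium_contributions
    (b ξl ξk x₁ y₁ : ℝ) (N M : ℕ)
    (hb0 : 0 < b) (hb1 : b < 1) (hN : 1 ≤ N) (hM : 1 ≤ M)
    (hξl : 0 < ξl) (hξk : 0 < ξk) (hx₁ : 0 < x₁) (hy₁ : 0 < y₁)
    (hFOCx : (1 / (N : ℝ)) *
        (b * (y₁ * M * ξk) ^ b * (x₁ * N * ξl) ^ (b - 1)) /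
        (((x₁ * N * ξl) ^ b + (y₁ * M * ξk) ^ b) ^ 2) = x₁)
    (hrel : Real.sqrt ξk * M * y₁ = Real.sqrt ξl * N * x₁) :
    x₁ ^ 2 = (1 / (N : ℝ) ^ 2) * (1 / ξl) *
        (b * (Real.sqrt (ξk * ξl)) ^ b) /
        ((Real.sqrt ξl ^ b + Real.sqrt ξk ^ b) ^ 2) ∧
    y₁ ^ 2 = (1 / (M : ℝ) ^ 2) * (1 / ξk) *
        (b * (Real.sqrt (ξk * ξl)) ^ b) /
        ((Real.sqrt ξl ^ b + Real.sqrt ξk ^ b) ^ 2) := by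
  set s := Real.sqrt ξl with hsdef
  set t := Real.sqrt ξk with htdef
  have hs0 : 0 < s := Real.sqrt_pos.mpr hξl
  have ht0 : 0 < t := Real.sqrt_pos.mpr hξk
  have hs : s * s = ξl := Real.mul_self_sqrt hξl.le
  have ht : t * t = ξk := Real.mul_self_sqrt hξk.le
  have hN0 : (0:ℝ) < N := by exact_mod_cast hN
  have hM0 : (0:ℝ) < M := by exact_mod_cast hM
  set c := (N:ℝ) * x₁ with hcdef
  have hc0 : 0 < c := by positivity
  have hA : x₁ * N * ξl = c * (s * s) := by rw [hs]; ring
  have hB : y₁ * M * ξk = c * (s * t) := by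
    have : y₁ * M * ξk = (t * M * y₁) * t := by rw [← ht]; ring
    rw [this, hrel]; ring
  have hst : Real.sqrt (ξk * ξl) = t * s := Real.sqrt_mul hξk.le ξl
  have hP : 0 < c ^ b := Real.rpow_pos_of_pos hc0 b
  have hQ : 0 < s ^ b := Real.rpow_pos_of_pos hs0 b
  have hR : 0 < t ^ b := Real.rpow_pos_of_pos ht0 b
  have hAb : (c * (s * s)) ^ b = c ^ b * (s ^ b * s ^ b) := by
    rw [Real.mul_rpow hc0.le (by positivity), Real.mul_rpow hs0.le hs0.le]
  have hBb : (c * (s * t)) ^ b = c ^ b * (s ^ b * t ^ b) := by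
    rw [Real.mul_rpow hc0.le (by positivity), Real.mul_rpow hs0.le ht0.le]
  have hA1 : (c * (s * s)) ^ (b - 1) = (c ^ b / c) * ((s ^ b / s) * (s ^ b / s)) := by
    rw [Real.mul_rpow hc0.le (by positivity), Real.mul_rpow hs0.le hs0.le,
      Real.rpow_sub hc0, Real.rpow_sub hs0, Real.rpow_one, Real.rpow_one]
  rw [hA, hB, hAb, hBb, hA1] at hFOCx
  rw [hst, Real.mul_rpow ht0.le hs0.le]
  set P := c ^ b
  set Q := s ^ b
  set R := t ^ b
  have h1 : x₁ = b * (R * Q) / ((N:ℝ) * c * (s * s) * (Q + R) ^ 2) := by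
    rw [← hFOCx]
    have hQR : 0 < Q + R := by positivity
    field_simp
  have key : x₁ ^ 2 = (1 / (N : ℝ) ^ 2) * (1 / ξl) * (b * (R * Q)) / ((Q + R) ^ 2) := by
    rw [hcdef] at h1
    rw [← hs]
    have hQR : 0 < Q + R := by positivity
    field_simp at h1 ⊢
    linear_combination h1
  refine ⟨key, ?_⟩
  have hsq : y₁ ^ 2 = ξl * (N:ℝ) ^ 2 * x₁ ^ 2 / (ξk * (M:ℝ) ^ 2) := by
    have h2 : (t * ↑M * y₁) ^ 2 = (s * ↑N * x₁) ^ 2 := by rw [hrel]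
    rw [← hs, ← ht]
    field_simp
    linear_combination h2
  rw [hsq, key, ← hs, ← ht]
  have hQR : 0 < Q + R := by positivity
  field_simp
end

section
/- In the two-coalition contest game with 0 < b < 1 and ξ̄_l ≥ ξ̄_k, the equilibrium utility U_j(ξ̄_l) = (ξ_j/N)·(1 − (√ξ̄_k)^b/((√ξ̄_l)^b + (√ξ̄_k)^b)) − (ξ_j²/(2N²ξ̄_l))·b·(√(ξ̄_k ξ̄_l))^b/((√ξ̄_l)^b + (√ξ̄_k)^b)² satisfies the single-crossing condition ∂²U_j/(∂ξ̄_l ∂ξ_j) > 0. -/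
/-- Two-coalition contest, `0 < b < 1`, `ξ̄_l ≥ ξ̄_k`: the equilibrium utility
satisfies the single-crossing condition `∂²U_j/(∂ξ̄_l ∂ξ_j) > 0`. -/
theorem contest_single_crossing
    (b ξk ξlv ξjv : ℝ) (N : ℕ) (hN : 1 ≤ N)
    (hb0 : 0 < b) (hb1 : b < 1) (hξk : 0 < ξk) (hξl : ξk ≤ ξlv) (hξj : 0 < ξjv) :
    0 < deriv (fun ξj : ℝ =>
          deriv (fun ξl : ℝ =>
              (ξj / N) * (1 - Real.sqrt ξk ^ b / (Real.sqrt ξl ^ b + Real.sqrt ξk ^ b))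
                - (ξj ^ 2 / (2 * (N : ℝ) ^ 2 * ξl)) *
                    (b * Real.sqrt (ξk * ξl) ^ b) /
                    ((Real.sqrt ξl ^ b + Real.sqrt ξk ^ b) ^ 2)) ξlv) ξjv := by
  have hl0 : 0 < ξlv := lt_of_lt_of_le hξk hξl
  have hN0 : (0:ℝ) < (N:ℝ) := by exact_mod_cast Nat.lt_of_lt_of_le Nat.zero_lt_one hN
  -- rewrite √(ξk*ξl)^b = √ξk^b * √ξl^b
  simp only [Real.sqrt_mul hξk.le,
    Real.mul_rpow (Real.sqrt_nonneg _) (Real.sqrt_nonneg _)]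
  set A := Real.sqrt ξk ^ b with hAdef
  set g := Real.sqrt ξlv ^ b with hgdef
  have hApos : 0 < A := Real.rpow_pos_of_pos (Real.sqrt_pos.mpr hξk) b
  have hgpos : 0 < g := Real.rpow_pos_of_pos (Real.sqrt_pos.mpr hl0) b
  have hd : 0 < g + A := by positivity
  -- derivative of ξl ↦ √ξl ^ b at ξlv
  have hG : HasDerivAt (fun ξl : ℝ => Real.sqrt ξl ^ b) (b / (2 * ξlv) * g) ξlv := by
    have h1 : HasDerivAt (fun x : ℝ => x ^ (b/2)) ((b/2) * ξlv ^ (b/2 - 1)) ξlv :=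
      Real.hasDerivAt_rpow_const (Or.inl (ne_of_gt hl0))
    have heq : (fun ξl : ℝ => Real.sqrt ξl ^ b) =ᶠ[nhds ξlv] (fun x : ℝ => x ^ (b/2)) := by
      filter_upwards [eventually_gt_nhds hl0] with x hx
      rw [Real.sqrt_eq_rpow, ← Real.rpow_mul hx.le, show (1:ℝ)/2*b = b/2 by ring]
    have h2 := h1.congr_of_eventuallyEq heq
    refine h2.congr_deriv (Eq.symm ?_)
    rw [hgdef, Real.sqrt_eq_rpow, ← Real.rpow_mul hl0.le, Real.rpow_sub hl0,
      Real.rpow_one]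
    have : (1:ℝ)/2 * b = b/2 := by ring
    rw [this]
    field_simp
  set C1 : ℝ := A * (b / (2 * ξlv) * g) / ((N:ℝ) * (g + A) ^ 2) with hC1def
  set C2 : ℝ := b * A * g * ((1 - b/2) * (g + A) + b * g) /
      (2 * (N:ℝ) ^ 2 * ξlv ^ 2 * (g + A) ^ 3) with hC2def
  have hkey : ∀ ξj : ℝ,
      deriv (fun ξl : ℝ =>
          (ξj / N) * (1 - A / (Real.sqrt ξl ^ b + A))
            - (ξj ^ 2 / (2 * (N : ℝ) ^ 2 * ξl)) *
                (b * (A * Real.sqrt ξl ^ b)) /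
                ((Real.sqrt ξl ^ b + A) ^ 2)) ξlv
        = ξj * C1 + ξj ^ 2 * C2 := by
    intro ξj
    have hden : HasDerivAt (fun ξl : ℝ => 2 * (N:ℝ) ^ 2 * ξl) (2 * (N:ℝ) ^ 2 * 1) ξlv :=
      (hasDerivAt_id ξlv).const_mul _
    have hu := (hasDerivAt_const ξlv (ξj ^ 2)).div hden (by positivity)
    have hv := (hG.const_mul A).const_mul b
    have hw := (hG.add_const A).pow 2
    have ht1 := (((hasDerivAt_const ξlv A).div (hG.add_const A) hd.ne').const_sub
      (1:ℝ)).const_mul (ξj / (N:ℝ))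
    have ht2 := (hu.mul hv).div hw (by show (g + A) ^ 2 ≠ 0; positivity)
    have hf := ht1.sub ht2
    rw [(show HasDerivAt (fun ξl : ℝ => (ξj / N) * (1 - A / (Real.sqrt ξl ^ b + A)) - (ξj ^ 2 / (2 * (N : ℝ) ^ 2 * ξl)) * (b * (A * Real.sqrt ξl ^ b)) / ((Real.sqrt ξl ^ b + A) ^ 2)) _ ξlv from hf).deriv, hC1def, hC2def]
    simp only [Pi.div_apply, Pi.mul_apply, Pi.pow_apply, ← hgdef]
    field_simp
    ring
  have hfun : (fun ξj : ℝ =>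
      deriv (fun ξl : ℝ =>
          (ξj / N) * (1 - A / (Real.sqrt ξl ^ b + A))
            - (ξj ^ 2 / (2 * (N : ℝ) ^ 2 * ξl)) *
                (b * (A * Real.sqrt ξl ^ b)) /
                ((Real.sqrt ξl ^ b + A) ^ 2)) ξlv)
      = fun ξj : ℝ => ξj * C1 + ξj ^ 2 * C2 := funext hkey
  rw [hfun]
  have houter : HasDerivAt (fun ξj : ℝ => ξj * C1 + ξj ^ 2 * C2)
      (1 * C1 + (2:ℕ) * ξjv ^ (2 - 1) * C2) ξjv :=
    ((hasDerivAt_id ξjv).mul_const C1).add ((hasDerivAt_pow 2 ξjv).mul_const C2)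
  rw [houter.deriv]
  have hC1 : 0 < C1 := by rw [hC1def]; positivity
  have hC2 : 0 < C2 := by
    rw [hC2def]
    apply div_pos
    · have h12 : 0 < (1:ℝ) - b/2 := by linarith
      have hin : 0 < (1 - b/2) * (g + A) + b * g :=
        add_pos (mul_pos h12 hd) (mul_pos hb0 hgpos)
      have := mul_pos (mul_pos (mul_pos hb0 hApos) hgpos) hin
      linarith
    · positivity
  have : 0 < (2:ℕ) * ξjv ^ (2 - 1) * C2 := by positivity
  linarith
end
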